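/- For every nonzero integer n one has l_n ≠ 1. -/

import Mathlib

open Complex Filter

/-- `Θ_i = α_i + i·β_i`. -/
noncomputable def Thi (αi βi : ℝ) : ℂ := (αi : ℂ) + (βi : ℂ) * Complex.I

/-- `Θ_o = α_o + i·β_o`. -/
noncomputable def Tho (αo βo : ℝ) : ℂ := (αo : ℂ) + (βo : ℂ) * Complex.I

/-- The multiplier `l_n` of equation (36A):
`l_n = (1 − R^{2n})·|Θ_i|² / ((sign(n)·α_i − i·β_i)·(Θ_o + R^{2n}·Θ̄_o))`. -/
noncomputable def lseq (αi αo βi βo R : ℝ) (n : ℤ) : ℂ :=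
  (((1 - R ^ (2 * n)) * ‖Thi αi βi‖ ^ 2 : ℝ) : ℂ) /
    (((n.sign : ℂ) * (αi : ℂ) - (βi : ℂ) * Complex.I) *
      (Tho αo βo + ((R ^ (2 * n) : ℝ) : ℂ) * (starRingEnd ℂ) (Tho αo βo)))

/-- For every nonzero integer `n` one has `l_n ≠ 1`. -/
theorem statement3 (αi αo βi βo R : ℝ)
    (hαi : 0 < αi) (hαo : 0 < αo) (hβi : 0 ≤ βi) (hβo : 0 ≤ βo) (hR : 2 ≤ R) :
    ∀ n : ℤ, n ≠ 0 → lseq αi αo βi βo R n ≠ 1 := by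
  intro n hn h
  have hR1 : (1:ℝ) < R := by linarith
  set t : ℝ := R ^ (2 * n) with ht
  have ht0 : 0 < t := zpow_pos (by linarith) _
  have hd : (((n.sign : ℂ) * (αi : ℂ) - (βi : ℂ) * Complex.I) *
      (Tho αo βo + ((t : ℝ) : ℂ) * (starRingEnd ℂ) (Tho αo βo))) ≠ 0 := by
    intro h0
    rw [lseq, ← ht, h0, div_zero] at h
    exact one_ne_zero h.symm
  have hnum : (((1 - t) * ‖Thi αi βi‖ ^ 2 : ℝ) : ℂ) =
      (((n.sign : ℂ) * (αi : ℂ) - (βi : ℂ) * Complex.I) *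
      (Tho αo βo + ((t : ℝ) : ℂ) * (starRingEnd ℂ) (Tho αo βo))) := by
    rw [lseq, ← ht, div_eq_one_iff_eq hd] at h
    exact h
  have habs : ‖Thi αi βi‖ ^ 2 = αi ^ 2 + βi ^ 2 := by
    rw [Complex.sq_norm, Thi, Complex.normSq_add_mul_I]
  rcases lt_or_gt_of_ne hn with hneg | hpos
  · have hs : n.sign = -1 := Int.sign_eq_neg_one_iff_neg.mpr hneg
    have ht1 : t < 1 := by
      rw [ht]
      apply zpow_lt_one_of_neg₀ hR1 (by omega)
    rw [hs, habs, Tho, Complex.ext_iff] at hnum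
    simp [Complex.ext_iff, Complex.mul_re, Complex.mul_im, Complex.add_re, Complex.add_im, ← Complex.ofReal_pow] at hnum
    obtain ⟨h1, h2⟩ := hnum
    have e1 : αi * (1 - t) * βo + βi * (1 + t) * αo = 0 := by linear_combination h2
    have p1 : 0 ≤ αi * (1 - t) * βo :=
      mul_nonneg (mul_nonneg hαi.le (by linarith)) hβo
    have p2 : 0 ≤ βi * (1 + t) * αo :=
      mul_nonneg (mul_nonneg hβi (by linarith)) hαo.le
    have hbi : βi = 0 := by
      by_contra hb
      have hbpos : 0 < βi := lt_of_le_of_ne hβi (Ne.symm hb)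
      nlinarith [mul_pos (mul_pos hbpos (by linarith : (0:ℝ) < 1 + t)) hαo]
    subst hbi
    nlinarith [mul_pos (sub_pos.mpr ht1) (mul_pos hαi hαi),
      mul_pos (mul_pos hαi hαo) ht0, mul_pos hαi hαo]
  · have hs : n.sign = 1 := Int.sign_eq_one_iff_pos.mpr hpos
    have ht1 : 1 < t := by
      rw [ht]
      apply one_lt_zpow₀ hR1 (by omega)
    rw [hs, habs, Tho, Complex.ext_iff] at hnum
    simp [Complex.ext_iff, Complex.mul_re, Complex.mul_im, Complex.add_re, Complex.add_im, ← Complex.ofReal_pow] at hnum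
    obtain ⟨h1, h2⟩ := hnum
    have e1 : αi * (t - 1) * βo + βi * (1 + t) * αo = 0 := by linear_combination h2
    have p1 : 0 ≤ αi * (t - 1) * βo :=
      mul_nonneg (mul_nonneg hαi.le (by linarith)) hβo
    have p2 : 0 ≤ βi * (1 + t) * αo :=
      mul_nonneg (mul_nonneg hβi (by linarith)) hαo.le
    have hbi : βi = 0 := by
      by_contra hb
      have hbpos : 0 < βi := lt_of_le_of_ne hβi (Ne.symm hb)
      nlinarith [mul_pos (mul_pos hbpos (by linarith : (0:ℝ) < 1 + t)) hαo]
    subst hbi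
    nlinarith [mul_pos (sub_pos.mpr ht1) (mul_pos hαi hαi),
      mul_pos (mul_pos hαi hαo) ht0, mul_pos hαi hαo]
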